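/- If at time √L + 1 a deterministic scheduler has at least √L/2 unfinished jobs from S_2, then on instance T_1, for every t with √L + 1 ≤ t ≤ L + √L, there are at least √L/2 released-but-unfinished jobs: at each step at most one job incident to v_3 is processed (all jobs in S_2 ∪ S_3 contain v_3), and one new S_3 job arrives, so the count of alive jobs incident to v_3 never drops below √L/2. -/

import Mathlib

open Finset

/-- On instance `T₁`, all jobs of `S₂ ∪ S₃` contain vertex `v₃`, so the
matching constraint (degree bound 1) lets the scheduler complete at most one of them per
time step, i.e. completion times are injective.  `S₂` is `√L = m` unit jobs released at
time 1; `S₃` releases one unit job at each time `m + k` for `k ∈ [L]` (encoded as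
`m + 1 + k` for `k < L`).  If at time `m + 1` at least `m/2` jobs of `S₂` are unfinished
(`C j ≥ m + 1`), then at every time `t` with `m + 1 ≤ t ≤ L + m` there are at least
`m/2` released-but-unfinished jobs (`rel j ≤ t ≤ C j`). -/
theorem backlog_persists (m L : ℕ)
    (C : (Fin m ⊕ Fin L) → ℕ)
    (rel : (Fin m ⊕ Fin L) → ℕ)
    (hrel : rel = Sum.elim (fun _ => 1) (fun k => m + 1 + k.val))
    (hC : ∀ j, rel j ≤ C j)
    (hinj : Function.Injective C)
    (hstart : m ≤ 2 * (univ.filter (fun j : Fin m => m + 1 ≤ C (Sum.inl j))).card) :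
    ∀ t : ℕ, m + 1 ≤ t → t ≤ L + m →
      m ≤ 2 * (univ.filter (fun j : Fin m ⊕ Fin L => rel j ≤ t ∧ t ≤ C j)).card := by
  intro t ht1 ht2
  induction t, ht1 using Nat.le_induction with
  | base =>
    have hcard : (univ.filter (fun j : Fin m => m + 1 ≤ C (Sum.inl j))).card ≤
        (univ.filter (fun j : Fin m ⊕ Fin L => rel j ≤ m + 1 ∧ m + 1 ≤ C j)).card := by
      apply Finset.card_le_card_of_injOn (fun j => Sum.inl j)
      · intro j hj
        simp only [mem_coe, mem_filter, mem_univ, true_and] at hj ⊢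
        subst hrel
        exact ⟨by simp, hj⟩
      · intro a _ b _ h
        exact Sum.inl.inj h
    omega
  | succ t ht ih =>
    have hL : t - m < L := by omega
    have key := ih (by omega)
    -- the new job released at time t+1
    set nj : Fin m ⊕ Fin L := Sum.inr ⟨t - m, hL⟩ with hnj
    have hrelnj : rel nj = t + 1 := by subst hrel; simp [hnj]; omega
    have hcard : (univ.filter (fun j : Fin m ⊕ Fin L => rel j ≤ t ∧ t ≤ C j)).card ≤
        (univ.filter (fun j : Fin m ⊕ Fin L => rel j ≤ t + 1 ∧ t + 1 ≤ C j)).card := by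
      apply Finset.card_le_card_of_injOn (fun j => if C j = t then nj else j)
      · intro j hj
        simp only [mem_coe, mem_filter, mem_univ, true_and] at hj ⊢
        by_cases h : C j = t
        · rw [if_pos h]
          have := hC nj
          exact ⟨le_of_eq hrelnj, by omega⟩
        · rw [if_neg h]
          exact ⟨le_trans hj.1 (by omega), by omega⟩
      · intro a ha b hb hab
        dsimp only at hab
        simp only [coe_filter, Set.mem_setOf_eq, mem_univ, true_and] at ha hb
        by_cases h1 : C a = t <;> by_cases h2 : C b = t
        · exact hinj (h1.trans h2.symm)
        · exfalso
          rw [if_pos h1, if_neg h2] at hab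
          have : rel b ≤ t := hb.1
          rw [← hab, hrelnj] at this
          omega
        · exfalso
          rw [if_neg h1, if_pos h2] at hab
          have : rel a ≤ t := ha.1
          rw [hab, hrelnj] at this
          omega
        · rwa [if_neg h1, if_neg h2] at hab
    omega
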